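/- Let R be a commutative ring, N ≥ 1 and m ≥ 0 integers, and u ∈ R. Then in the polynomial ring R[x_1,…,x_N] one has h_m(x_1,…,x_N) = Σ_{k=0}^{m} (−1)^k C(N−1+m, m−k) · h_k(u−x_1,…,u−x_N) · u^{m−k}, where h_j denotes the complete homogeneous symmetric polynomial of degree j and h_k(u−x_1,…,u−x_N) is obtained from h_k by substituting u − x_i for x_i. -/

import Mathlib

/-!
STATEMENT 6: Let R be a commutative ring, N ≥ 1, m ≥ 0, u ∈ R.  In R[x_1,…,x_N]:
h_m(x_1,…,x_N) = Σ_{k=0}^{m} (−1)^k C(N−1+m, m−k) h_k(u−x_1,…,u−x_N) u^{m−k},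
where h_j is the complete homogeneous symmetric polynomial of degree j.
-/

noncomputable section

/-- The complete homogeneous symmetric polynomial h_j in N variables: the sum of
all monomials of total degree j. -/
def hpoly (R : Type*) [CommRing R] (N j : ℕ) : MvPolynomial (Fin N) R :=
  ∑ d ∈ Finset.Nat.antidiagonalTuple N j,
    MvPolynomial.monomial (Finsupp.equivFunOnFinite.symm d) (1 : R)

section HPSaux
open Finset MvPolynomial

lemma HPS_csymm (a b : ℕ) : (a + b).choose a = (a + b).choose b := by
  rw [← Nat.choose_symm (Nat.le_add_right a b), Nat.add_sub_cancel_left]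

lemma HPS_hock (q n : ℕ) : ∑ b ∈ range (n+1), (b + q).choose b = (n + q + 1).choose n := by
  calc ∑ b ∈ range (n+1), (b + q).choose b = ∑ b ∈ range (n+1), (b + q).choose q := by
        exact Finset.sum_congr rfl fun b _ => HPS_csymm b q
    _ = (n + q + 1).choose (q + 1) := Nat.sum_range_add_choose n q
    _ = (n + q + 1).choose n := by
        rw [← Nat.choose_symm (by omega : q + 1 ≤ n + q + 1)]
        congr 1; omega

lemma HPS_sum_refl (q n : ℕ) : ∑ i ∈ range (n+1), (n - i + q).choose (n - i)
    = ∑ b ∈ range (n+1), (b + q).choose b := by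
  refine Finset.sum_nbij' (fun a => n - a) (fun b => n - b) ?_ ?_ ?_ ?_ ?_ <;>
    intro a ha <;> simp only [Finset.mem_range] at ha ⊢ <;>
    first | omega | rfl

lemma HPS_vand (p : ℕ) : ∀ q n : ℕ,
    ∑ ab ∈ Finset.HasAntidiagonal.antidiagonal n, (ab.1 + p).choose ab.1 * (ab.2 + q).choose ab.2
      = (n + p + q + 1).choose n := by
  induction p with
  | zero =>
    intro q n
    rw [Nat.sum_antidiagonal_eq_sum_range_succ_mk]
    simp only [Nat.add_zero, Nat.choose_zero_right, Nat.choose_self, one_mul]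
    rw [HPS_sum_refl, HPS_hock]
  | succ p ih =>
    intro q n
    rw [Nat.sum_antidiagonal_eq_sum_range_succ_mk]
    have expand : ∀ a, (a + (p+1)).choose a = ∑ j ∈ range (a+1), (j + p).choose j :=
      fun a => (HPS_hock p a).symm
    calc ∑ a ∈ range (n+1), (a + (p+1)).choose a * (n - a + q).choose (n - a)
        = ∑ a ∈ range (n+1), ∑ j ∈ range (a+1), (j + p).choose j * (n - a + q).choose (n - a) := by
          refine Finset.sum_congr rfl fun a _ => ?_
          rw [expand a, Finset.sum_mul]
      _ = ∑ j ∈ range (n+1), ∑ a ∈ Icc j n, (j + p).choose j * (n - a + q).choose (n - a) := by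
          rw [Finset.sum_sigma', Finset.sum_sigma']
          refine Finset.sum_nbij' (fun x => ⟨x.2, x.1⟩) (fun x => ⟨x.2, x.1⟩) ?_ ?_ ?_ ?_ ?_ <;>
            rintro ⟨a, b⟩ h <;>
            simp only [Finset.mem_sigma, Finset.mem_range, Finset.mem_Icc] at h ⊢ <;>
            first | omega | rfl
      _ = ∑ j ∈ range (n+1), (j + p).choose j * ((n - j) + (q+1)).choose (n - j) := by
          refine Finset.sum_congr rfl fun j hj => ?_
          simp only [mem_range] at hj
          rw [← Finset.mul_sum]
          congr 1
          calc ∑ a ∈ Icc j n, (n - a + q).choose (n - a)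
              = ∑ b ∈ range (n - j + 1), (b + q).choose b := by
                refine Finset.sum_nbij' (fun a => n - a) (fun b => n - b) ?_ ?_ ?_ ?_ ?_ <;>
                  intro a ha <;>
                  simp only [Finset.mem_Icc, Finset.mem_range] at ha ⊢ <;>
                  first | omega | rfl
            _ = (n - j + q + 1).choose (n - j) := HPS_hock q (n - j)
            _ = (n - j + (q + 1)).choose (n - j) := rfl
      _ = (n + p + (q+1) + 1).choose n := by
          have := ih (q+1) n
          rw [Nat.sum_antidiagonal_eq_sum_range_succ_mk] at this
          rw [← this]
      _ = (n + (p+1) + q + 1).choose n := by congr 1; omega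




lemma HPS_vand' (p q n : ℕ) :
    ∑ ab ∈ Finset.HasAntidiagonal.antidiagonal n, (ab.1 + p).choose ab.1 * (ab.2 + q - 1).choose ab.2
      = (n + p + q).choose n := by
  rcases Nat.eq_zero_or_pos q with rfl | hq
  · rw [Nat.sum_antidiagonal_eq_sum_range_succ_mk]
    have h : ∀ a ∈ range (n+1), (a + p).choose a * (n - a + 0 - 1).choose (n - a)
        = if a = n then (n + p).choose n else 0 := by
      intro a ha
      simp only [mem_range] at ha
      rcases eq_or_ne a n with rfl | h
      · simp
      · rw [if_neg h,
          Nat.choose_eq_zero_of_lt (show n - a + 0 - 1 < n - a by omega), mul_zero]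
    rw [Finset.sum_congr rfl h, Finset.sum_ite_eq' (range (n+1)) n, if_pos (by simp), Nat.add_zero]
  · have h : ∀ ab ∈ Finset.HasAntidiagonal.antidiagonal n, (ab.1 + p).choose ab.1 * (ab.2 + q - 1).choose ab.2
        = (ab.1 + p).choose ab.1 * (ab.2 + (q - 1)).choose ab.2 := by
      rintro ⟨a, b⟩ _
      congr 2
      omega
    rw [Finset.sum_congr rfl h, HPS_vand p (q-1) n]
    congr 1; omega

variable {ι : Type*} [DecidableEq ι]

lemma HPS_key (s : Finset ι) (e : ι → ℕ) : ∀ n : ℕ,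
    ∑ f ∈ s.piAntidiag n, ∏ i ∈ s, (e i + f i).choose (f i)
      = (n + (∑ i ∈ s, e i) + s.card - 1).choose n := by
  induction s using Finset.cons_induction with
  | empty =>
    intro n
    rcases Nat.eq_zero_or_pos n with rfl | hn
    · simp
    · rw [Finset.piAntidiag_empty_of_ne_zero hn.ne']
      simp [Nat.choose_eq_zero_of_lt (by omega : n - 1 < n)]
  | cons i s hi ih =>
    intro n
    rw [Finset.piAntidiag_cons hi, Finset.sum_disjiUnion]
    have hterm : ∀ p ∈ Finset.HasAntidiagonal.antidiagonal n,
        (∑ f ∈ (s.piAntidiag p.2).map (addRightEmbedding fun t => if t = i then p.1 else 0),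
          ∏ j ∈ cons i s hi, (e j + f j).choose (f j))
        = (p.1 + e i).choose p.1 *
            (p.2 + (∑ j ∈ s, e j) + s.card - 1).choose p.2 := by
      rintro ⟨a, b⟩ hp
      rw [Finset.sum_map, ← ih b, Finset.mul_sum]
      refine Finset.sum_congr rfl fun f hf => ?_
      simp only [Finset.mem_piAntidiag] at hf
      have hfi : f i = 0 := by
        by_contra h
        exact hi (hf.2 i h)
      simp only [addRightEmbedding_apply, Pi.add_apply, Finset.prod_cons, hfi, zero_add]
      rw [if_pos trivial, Nat.add_comm (e i) a]
      congr 1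
      refine Finset.prod_congr rfl fun j hj => ?_
      have hji : j ≠ i := fun h => hi (h ▸ hj)
      simp [hji]
    rw [Finset.sum_congr rfl hterm]
    have h2 : ∀ p ∈ Finset.HasAntidiagonal.antidiagonal n,
        (p.1 + e i).choose p.1 * (p.2 + (∑ j ∈ s, e j) + s.card - 1).choose p.2
        = (p.1 + e i).choose p.1 * (p.2 + ((∑ j ∈ s, e j) + s.card) - 1).choose p.2 := by
      rintro ⟨a, b⟩ _
      congr 2
      omega
    rw [Finset.sum_congr rfl h2, HPS_vand' (e i) ((∑ j ∈ s, e j) + s.card) n]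
    rw [Finset.sum_cons, Finset.card_cons]
    congr 1
    omega



lemma HPS_key' (N k n : ℕ) (e : Fin N → ℕ) (he : ∑ i, e i = k) :
    ∑ f ∈ Finset.Nat.antidiagonalTuple N n, ∏ i, ((e i + f i).choose (e i) : ℕ)
      = (n + k + N - 1).choose n := by
  rw [← Finset.piAntidiag_univ_fin_eq_antidiagonalTuple n N]
  rw [← he]
  have := HPS_key (univ : Finset (Fin N)) e n
  rw [Finset.card_univ, Fintype.card_fin] at this
  rw [← this]
  exact Finset.sum_congr rfl fun f _ => Finset.prod_congr rfl fun i _ => HPS_csymm (e i) (f i)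

variable {R : Type*} [CommRing R] {N : ℕ} (u : R)

local notation "A" => MvPolynomial (Fin N) R

lemma HPS_mono (e : Fin N → ℕ) :
    (MvPolynomial.monomial (Finsupp.equivFunOnFinite.symm e) (1:R)) = ∏ i, X i ^ e i := by
  rw [MvPolynomial.monomial_eq, MvPolynomial.C_1, one_mul, Finsupp.prod_fintype]
  · rfl
  · intro i; exact pow_zero _

lemma HPS_sub_pow_expand (x : A) (n : ℕ) :
    (MvPolynomial.C u - x) ^ n
      = ∑ e ∈ range (n+1), (-x) ^ e * MvPolynomial.C u ^ (n - e) * (n.choose e : A) := by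
  rw [sub_eq_neg_add, add_pow]

/-- Statement (A). -/
lemma HPS_stepA (m : ℕ) (hN : 1 ≤ N) :
    MvPolynomial.bind₁ (fun i : Fin N => MvPolynomial.C u - MvPolynomial.X i) (hpoly R N m)
      = ∑ k ∈ Finset.range (m + 1),
          (-1) ^ k * (Nat.choose (N - 1 + m) (m - k) : A) * hpoly R N k *
            MvPolynomial.C u ^ (m - k) := by
  -- LHS expansion
  have lhs1 : MvPolynomial.bind₁ (fun i : Fin N => MvPolynomial.C u - MvPolynomial.X i)
      (hpoly R N m)
      = ∑ d ∈ Finset.Nat.antidiagonalTuple N m,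
          ∑ e ∈ Fintype.piFinset (fun i => range (d i + 1)),
            ∏ i, ((- X i : A) ^ e i * MvPolynomial.C u ^ (d i - e i) * ((d i).choose (e i) : A)) := by
    rw [hpoly, map_sum]
    refine Finset.sum_congr rfl fun d _ => ?_
    rw [HPS_mono, map_prod]
    have : ∀ i : Fin N,
        (MvPolynomial.bind₁ (fun i : Fin N => MvPolynomial.C u - MvPolynomial.X i)) (X i ^ d i)
        = (MvPolynomial.C u - MvPolynomial.X i) ^ d i := by
      intro i; rw [map_pow, MvPolynomial.bind₁_X_right]
    rw [Finset.prod_congr rfl fun i _ => this i]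
    rw [Finset.prod_congr rfl fun i _ => HPS_sub_pow_expand u (X i) (d i)]
    rw [Finset.prod_univ_sum]
  -- RHS expansion
  have rhs1 : (∑ k ∈ Finset.range (m + 1),
        (-1) ^ k * (Nat.choose (N - 1 + m) (m - k) : A) * hpoly R N k *
          MvPolynomial.C u ^ (m - k))
      = ∑ k ∈ Finset.range (m + 1),
          ∑ ef ∈ Finset.Nat.antidiagonalTuple N k ×ˢ Finset.Nat.antidiagonalTuple N (m - k),
            (-1) ^ k * ((∏ i, ((ef.1 i + ef.2 i).choose (ef.1 i) : ℕ) : ℕ) : A) *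
              MvPolynomial.monomial (Finsupp.equivFunOnFinite.symm ef.1) (1 : R) *
              MvPolynomial.C u ^ (m - k) := by
    refine Finset.sum_congr rfl fun k hk => ?_
    simp only [mem_range] at hk
    rw [Finset.sum_product]
    rw [hpoly, Finset.mul_sum, Finset.sum_mul]
    refine Finset.sum_congr rfl fun e he => ?_
    rw [Finset.Nat.mem_antidiagonalTuple] at he
    have hcn : (N - 1 + m).choose (m - k)
        = ∑ f ∈ Finset.Nat.antidiagonalTuple N (m - k), ∏ i, (e i + f i).choose (e i) := by
      rw [HPS_key' N k (m - k) e he]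
      congr 1
      omega
    have hc : ((N - 1 + m).choose (m - k) : A)
        = ∑ f ∈ Finset.Nat.antidiagonalTuple N (m - k),
            ((∏ i, (e i + f i).choose (e i) : ℕ) : A) := by
      rw [← Nat.cast_sum, hcn]
    rw [hc, Finset.mul_sum, Finset.sum_mul, Finset.sum_mul]
  rw [lhs1, rhs1]
  rw [Finset.sum_sigma', Finset.sum_sigma']
  refine Finset.sum_nbij' (fun x => ⟨∑ i, x.2 i, (x.2, fun i => x.1 i - x.2 i)⟩)
    (fun x => ⟨fun i => x.2.1 i + x.2.2 i, x.2.1⟩) ?_ ?_ ?_ ?_ ?_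
  · rintro ⟨d, e⟩ h
    simp only [Finset.mem_sigma, Finset.Nat.mem_antidiagonalTuple, Fintype.mem_piFinset,
      mem_range, Finset.mem_product] at h ⊢
    obtain ⟨hd, he⟩ := h
    have hle : ∀ i, e i ≤ d i := fun i => by have := he i; omega
    refine ⟨?_, trivial, ?_⟩
    · have : ∑ i, e i ≤ ∑ i, d i := Finset.sum_le_sum fun i _ => hle i
      omega
    · rw [← hd, Finset.sum_tsub_distrib]
      intro i _; exact hle i
  · rintro ⟨k, e, f⟩ h
    simp only [Finset.mem_sigma, Finset.Nat.mem_antidiagonalTuple, Fintype.mem_piFinset,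
      mem_range, Finset.mem_product] at h ⊢
    obtain ⟨hk, he, hf⟩ := h
    constructor
    · rw [Finset.sum_add_distrib, he, hf]; omega
    · intro i; omega
  · rintro ⟨d, e⟩ h
    simp only [Finset.mem_sigma, Finset.Nat.mem_antidiagonalTuple, Fintype.mem_piFinset,
      mem_range] at h
    obtain ⟨hd, he⟩ := h
    have hle : ∀ i, e i ≤ d i := fun i => by have := he i; omega
    simp only [Sigma.mk.inj_iff, heq_eq_eq]
    exact ⟨funext fun i => by have := hle i; omega, trivial⟩
  · rintro ⟨k, e, f⟩ h
    simp only [Finset.mem_sigma, Finset.Nat.mem_antidiagonalTuple, Fintype.mem_piFinset,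
      mem_range, Finset.mem_product] at h
    obtain ⟨hk, he, hf⟩ := h
    simp only [Sigma.mk.inj_iff, heq_eq_eq, Prod.mk.injEq]
    exact ⟨he, trivial, funext fun i => by omega⟩
  · rintro ⟨d, e⟩ h
    simp only [Finset.mem_sigma, Finset.Nat.mem_antidiagonalTuple, Fintype.mem_piFinset,
      mem_range] at h
    obtain ⟨hd, he⟩ := h
    have hle : ∀ i, e i ≤ d i := fun i => by have := he i; omega
    -- value equality
    have h1 : ∀ i : Fin N, (- X i : A) ^ e i = (-1) ^ e i * X i ^ e i := fun i => by
      rw [neg_pow]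
    calc ∏ i, ((- X i : A) ^ e i * MvPolynomial.C u ^ (d i - e i) * ((d i).choose (e i) : A))
        = (∏ i, (- X i : A) ^ e i) * (∏ i, (MvPolynomial.C u : A) ^ (d i - e i)) *
            (∏ i, ((d i).choose (e i) : A)) := by
          rw [← Finset.prod_mul_distrib, ← Finset.prod_mul_distrib]
      _ = ((-1 : A) ^ (∑ i, e i) * ∏ i, (X i : A) ^ e i) *
            (MvPolynomial.C u ^ (∑ i, (d i - e i))) * (∏ i, ((d i).choose (e i) : A)) := by
          rw [Finset.prod_congr rfl fun i _ => h1 i, Finset.prod_mul_distrib,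
            Finset.prod_pow_eq_pow_sum, Finset.prod_pow_eq_pow_sum]
      _ = (-1 : A) ^ (∑ i, e i) *
            ((∏ i, ((e i + (d i - e i)).choose (e i) : ℕ) : ℕ) : A) *
            MvPolynomial.monomial (Finsupp.equivFunOnFinite.symm e) (1 : R) *
            MvPolynomial.C u ^ (m - ∑ i, e i) := by
          rw [HPS_mono]
          have hsub : ∑ i, (d i - e i) = m - ∑ i, e i := by
            rw [Finset.sum_tsub_distrib _ (fun i _ => hle i), hd]
          have hch : ∀ i : Fin N, e i + (d i - e i) = d i := fun i => by
            have := hle i; omega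
          have hprodcast : ((∏ i, (e i + (d i - e i)).choose (e i) : ℕ) : A)
              = ∏ i, (((d i).choose (e i) : ℕ) : A) := by
            rw [Nat.cast_prod]
            exact Finset.prod_congr rfl fun i _ => by rw [hch i]
          rw [hsub, hprodcast]
          ring



end HPSaux

open Finset MvPolynomial in
/-- h_m(x) = Σ_{k=0}^{m} (−1)^k C(N−1+m, m−k) · h_k(u−x_1,…,u−x_N) · u^{m−k}. -/
theorem hpoly_eq_sum_shifted (R : Type*) [CommRing R] (N m : ℕ) (hN : 1 ≤ N) (u : R) :
    hpoly R N m =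
      ∑ k ∈ Finset.range (m + 1),
        (-1) ^ k * (Nat.choose (N - 1 + m) (m - k) : MvPolynomial (Fin N) R) *
          (MvPolynomial.bind₁ (fun i : Fin N => MvPolynomial.C u - MvPolynomial.X i))
            (hpoly R N k) *
          MvPolynomial.C u ^ (m - k) := by
  have hA := congrArg (MvPolynomial.bind₁ (fun i : Fin N => MvPolynomial.C u - MvPolynomial.X i))
    (HPS_stepA u m hN)
  rw [MvPolynomial.bind₁_bind₁] at hA
  have hXX : (fun i : Fin N =>
      (MvPolynomial.bind₁ (fun j : Fin N => MvPolynomial.C u - MvPolynomial.X j))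
        (MvPolynomial.C u - MvPolynomial.X i)) = MvPolynomial.X := by
    funext i
    simp [map_sub, MvPolynomial.bind₁_X_right]
  rw [hXX, MvPolynomial.bind₁_X_left] at hA
  simp only [AlgHom.id_apply, map_sum, map_mul, map_pow, map_neg, map_one, map_natCast] at hA
  rw [hA]
  refine Finset.sum_congr rfl fun k hk => ?_
  simp [MvPolynomial.algHom_C, MvPolynomial.algebraMap_eq]

end
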